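/- For every positive integer K and every matrix M ∈ 𝓗_K, there exists a matrix M* ∈ 𝓗_K with rank(M*) = R*_K (the maximum rank over 𝓗_K) such that the column space of M is contained in the column space of M*. -/

import Mathlib

open Matrix

/-- `h` is `s`-sparse: at most `s` nonzero entries. -/
def IsSparse {L : ℕ} (s : ℕ) (h : Fin L → ℝ) : Prop :=
  {i : Fin L | h i ≠ 0}.ncard ≤ s

/-- Inputs `h 0, …, h (K-1)` steer the state `xinit` to `xfinal`:
`xfinal − D^K xinit = ∑_{k=1}^{K} D^{K−k} H h_k`. -/
def Steers {N L : ℕ} (D : Matrix (Fin N) (Fin N) ℝ) (H : Matrix (Fin N) (Fin L) ℝ)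
    (K : ℕ) (h : Fin K → Fin L → ℝ) (xinit xfinal : Fin N → ℝ) : Prop :=
  xfinal - (D ^ K) *ᵥ xinit = ∑ k : Fin K, (D ^ (K - 1 - (k : ℕ))) *ᵥ (H *ᵥ h k)

/-- The system `(D, H)` is `s`-sparse-controllable. -/
def SparseControllable (N L s : ℕ) (D : Matrix (Fin N) (Fin N) ℝ)
    (H : Matrix (Fin N) (Fin L) ℝ) : Prop :=
  ∀ xinit xfinal : Fin N → ℝ, ∃ K : ℕ, 0 < K ∧ ∃ h : Fin K → Fin L → ℝ,
    (∀ k, IsSparse s (h k)) ∧ Steers D H K h xinit xfinal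

/-- The family `𝓗_K` of `N × (Ks)` matrices
`[D^{K−1}H_{S_1} | D^{K−2}H_{S_2} | … | H_{S_K}]`, where each index set `S_i ⊆ {1,…,L}`
has cardinality `s`.  Each such matrix is encoded with columns indexed by
`Fin K × Fin s`, the set `S_k` being given by an injective enumeration
`f k : Fin s → Fin L` of its elements. -/
def KalmanFamily (N L s : ℕ) (D : Matrix (Fin N) (Fin N) ℝ)
    (H : Matrix (Fin N) (Fin L) ℝ) (K : ℕ) : Set (Matrix (Fin N) (Fin K × Fin s) ℝ) :=
  {M | ∃ f : Fin K → Fin s → Fin L, (∀ k, Function.Injective (f k)) ∧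
    M = Matrix.of fun (i : Fin N) (p : Fin K × Fin s) =>
      ((D ^ (K - 1 - (p.1 : ℕ))) * H) i (f p.1 p.2)}

/-- `R*_K`: the maximum rank over the family `𝓗_K`. -/
noncomputable def maxKalmanRank (N L s : ℕ) (D : Matrix (Fin N) (Fin N) ℝ)
    (H : Matrix (Fin N) (Fin L) ℝ) (K : ℕ) : ℕ :=
  sSup (Matrix.rank '' KalmanFamily N L s D H K)

section AuxDescent

open Submodule Set

variable {N K L : ℕ} (v : Fin K × Fin L → (Fin N → ℝ))

/-- Feasibility: at most `s` indices per block. -/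
def KFeas (s : ℕ) (B : Finset (Fin K × Fin L)) : Prop :=
  ∀ k : Fin K, (B.filter (fun p => p.1 = k)).card ≤ s

/-- The columns indexed by `B` are linearly independent. -/
def KInd (B : Finset (Fin K × Fin L)) : Prop :=
  LinearIndependent ℝ (fun x : ↥(↑B : Set (Fin K × Fin L)) => v ↑x)

lemma KFeas.mono {s : ℕ} {B T : Finset (Fin K × Fin L)} (hTB : T ⊆ B) (hB : KFeas s B) :
    KFeas s T := fun k =>
  le_trans (Finset.card_le_card (Finset.filter_subset_filter _ hTB)) (hB k)

lemma KInd.mono {B T : Finset (Fin K × Fin L)} (hTB : T ⊆ B) (hB : KInd v B) : KInd v T :=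
  hB.comp (Set.inclusion (by exact_mod_cast hTB))
    (Set.inclusion_injective (by exact_mod_cast hTB))

lemma KInd.insert {B : Finset (Fin K × Fin L)} {a : Fin K × Fin L} (ha : a ∉ B)
    (hva : v a ∉ span ℝ (v '' ↑B)) (hB : KInd v B) : KInd v (insert a B) := by
  unfold KInd
  rw [Finset.coe_insert]
  exact (linearIndepOn_insert (by exact_mod_cast ha)).mpr ⟨hB, hva⟩

lemma KInd.injOn {B : Finset (Fin K × Fin L)} (hB : KInd v B) : Set.InjOn v ↑B := by
  intro x hx y hy hxy
  have h := hB.injective (a₁ := ⟨x, hx⟩) (a₂ := ⟨y, hy⟩) hxy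
  exact congrArg Subtype.val h

lemma KInd.card_eq {B : Finset (Fin K × Fin L)} (hB : KInd v B) :
    Module.finrank ℝ (span ℝ (v '' ↑B)) = B.card := by
  have hinj := hB.injOn v
  have himg : v '' ↑B = ↑(B.image v) := (Finset.coe_image).symm
  have hind : LinearIndependent ℝ ((↑) : ↥(↑(B.image v) : Set (Fin N → ℝ)) → (Fin N → ℝ)) := by
    rw [← himg]
    exact LinearIndepOn.id_image hB
  rw [himg, finrank_span_finset_eq_card hind, Finset.card_image_of_injOn hinj]

lemma exists_redundant {S : Finset (Fin K × Fin L)} (hS : ¬ KInd v S) :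
    ∃ b ∈ S, v b ∈ span ℝ (v '' ↑(S.erase b)) := by
  by_contra hcon
  push_neg at hcon
  apply hS
  rw [KInd, linearIndependent_iff_notMem_span]
  intro i hi
  refine hcon ↑i i.2 ?_
  have himg : (fun x : ↥(↑S : Set (Fin K × Fin L)) => v ↑x) '' (Set.univ \ {i})
      = v '' ↑(S.erase ↑i) := by
    ext x
    simp only [Set.mem_image, Finset.coe_erase, Set.mem_diff, Set.mem_univ, true_and,
      Set.mem_singleton_iff, Finset.mem_coe]
    constructor
    · rintro ⟨y, hy, rfl⟩
      exact ⟨↑y, ⟨y.2, fun h => hy (Subtype.ext h)⟩, rfl⟩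
    · rintro ⟨y, ⟨hyS, hyne⟩, rfl⟩
      exact ⟨⟨y, hyS⟩, fun h => hyne (congrArg Subtype.val h), rfl⟩
  rwa [himg] at hi

lemma exists_basis_subset (S : Finset (Fin K × Fin L)) :
    ∃ B ⊆ S, KInd v B ∧ span ℝ (v '' ↑B) = span ℝ (v '' ↑S) := by
  induction S using Finset.strongInduction with
  | _ S ih =>
    by_cases hS : KInd v S
    · exact ⟨S, subset_rfl, hS, rfl⟩
    · obtain ⟨b, hbS, hred⟩ := exists_redundant v hS
      have hspan : span ℝ (v '' ↑(S.erase b)) = span ℝ (v '' ↑S) := by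
        have hcoe : (↑S : Set (Fin K × Fin L)) = insert b ↑(S.erase b) := by
          rw [Finset.coe_erase, Set.insert_diff_singleton, Set.insert_eq_self.mpr
            (Finset.mem_coe.mpr hbS)]
        conv_rhs => rw [hcoe]
        rw [Set.image_insert_eq, Submodule.span_insert_eq_span hred]
      obtain ⟨B, hBsub, hBind, hBspan⟩ := ih (S.erase b) (Finset.erase_ssubset hbS)
      exact ⟨B, hBsub.trans (Finset.erase_subset _ _), hBind, hBspan.trans hspan⟩

/-- The key descent lemma: given a feasible index set `A` and a feasible independent set `B`,
there is a feasible independent set `C`, at least as large as `B`, whose column span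
contains the column span of `A`. -/
lemma descend (s : ℕ) (A : Finset (Fin K × Fin L)) (hA : KFeas s A) :
    ∀ n : ℕ, ∀ B : Finset (Fin K × Fin L), KFeas s B → KInd v B → (A \ B).card ≤ n →
      ∃ C : Finset (Fin K × Fin L), KFeas s C ∧ KInd v C ∧ B.card ≤ C.card ∧
        span ℝ (v '' ↑A) ≤ span ℝ (v '' ↑C) := by
  intro n
  induction n with
  | zero =>
    intro B hBf hBi hcard
    refine ⟨B, hBf, hBi, le_rfl, span_mono (Set.image_mono ?_)⟩
    have : A \ B = ∅ := Finset.card_eq_zero.mp (Nat.le_zero.mp hcard)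
    exact_mod_cast (Finset.sdiff_eq_empty_iff_subset.mp this)
  | succ n ih =>
    intro B hBf hBi hcard
    by_cases hsub : span ℝ (v '' ↑A) ≤ span ℝ (v '' ↑B)
    · exact ⟨B, hBf, hBi, le_rfl, hsub⟩
    · have hnsub : ¬ (v '' ↑A ⊆ (span ℝ (v '' ↑B) : Set (Fin N → ℝ))) :=
        fun h => hsub (span_le.mpr h)
      obtain ⟨x, hxA, hxB⟩ := Set.not_subset.mp hnsub
      obtain ⟨a, haA, rfl⟩ := hxA
      have haA' : a ∈ A := Finset.mem_coe.mp haA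
      have haB : a ∉ B := fun h => hxB (subset_span (Set.mem_image_of_mem v (Finset.mem_coe.mpr h)))
      have haAB : a ∈ A \ B := Finset.mem_sdiff.mpr ⟨haA', haB⟩
      by_cases hlt : (B.filter (fun p => p.1 = a.1)).card < s
      · -- insert `a` into `B`
        have hBf' : KFeas s (insert a B) := by
          intro k
          rw [Finset.filter_insert]
          split_ifs with hk
          · subst hk
            exact le_trans (Finset.card_insert_le _ _) hlt
          · exact hBf k
        have hBi' : KInd v (insert a B) := KInd.insert v haB hxB hBi
        have hsd : A \ insert a B = (A \ B).erase a := Finset.sdiff_insert A B a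
        have hcard' : (A \ insert a B).card ≤ n := by
          rw [hsd, Finset.card_erase_of_mem haAB]
          omega
        obtain ⟨C, h1, h2, h3, h4⟩ := ih (insert a B) hBf' hBi' hcard'
        exact ⟨C, h1, h2, le_trans (le_trans (Nat.le_succ _)
          (Finset.card_insert_of_notMem haB).ge) h3, h4⟩
      · -- swap: find `b` in `B`'s block `a.1` with `b ∉ A`
        push_neg at hlt
        have hex : ∃ b ∈ B.filter (fun p => p.1 = a.1), b ∉ A := by
          by_contra hc
          push_neg at hc
          have hsub2 : insert a (B.filter (fun p => p.1 = a.1)) ⊆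
              A.filter (fun p => p.1 = a.1) := by
            intro x hx
            rcases Finset.mem_insert.mp hx with rfl | hx'
            · exact Finset.mem_filter.mpr ⟨haA', rfl⟩
            · exact Finset.mem_filter.mpr ⟨hc x hx', (Finset.mem_filter.mp hx').2⟩
          have hanot : a ∉ B.filter (fun p => p.1 = a.1) :=
            fun h => haB (Finset.mem_of_mem_filter a h)
          have h5 := Finset.card_le_card hsub2
          rw [Finset.card_insert_of_notMem hanot] at h5
          have h6 := hA a.1
          omega
        obtain ⟨b, hbf, hbA⟩ := hex
        obtain ⟨hbB, hbk⟩ := Finset.mem_filter.mp hbf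
        set B' := insert a (B.erase b) with hB'def
        have haeB : a ∉ B.erase b := fun h => haB (Finset.mem_of_mem_erase h)
        have hvaE : v a ∉ span ℝ (v '' ↑(B.erase b)) := fun h => hxB
          (span_mono (Set.image_mono (by exact_mod_cast Finset.erase_subset b B)) h)
        have hBi' : KInd v B' :=
          KInd.insert v haeB hvaE (KInd.mono v (Finset.erase_subset b B) hBi)
        have hBf' : KFeas s B' := by
          intro k
          rw [hB'def, Finset.filter_insert]
          by_cases hk : a.1 = k
          · rw [if_pos hk, Finset.filter_erase]
            have hbmem : b ∈ B.filter (fun p => p.1 = k) :=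
              Finset.mem_filter.mpr ⟨hbB, by rw [hbk, hk]⟩
            have h1 : ((B.filter (fun p => p.1 = k)).erase b).card
                = (B.filter (fun p => p.1 = k)).card - 1 := Finset.card_erase_of_mem hbmem
            have h2 := hBf k
            have h3 : (B.filter (fun p => p.1 = k)).card ≥ 1 := Finset.card_pos.mpr ⟨b, hbmem⟩
            calc (insert a ((B.filter (fun p => p.1 = k)).erase b)).card
                ≤ ((B.filter (fun p => p.1 = k)).erase b).card + 1 := Finset.card_insert_le _ _
              _ ≤ s := by omega
          · rw [if_neg hk, Finset.filter_erase]
            exact le_trans (Finset.card_le_card (Finset.erase_subset _ _)) (hBf k)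
        have hcardB' : B'.card = B.card := by
          rw [hB'def, Finset.card_insert_of_notMem haeB, Finset.card_erase_of_mem hbB]
          have : 1 ≤ B.card := Finset.card_pos.mpr ⟨b, hbB⟩
          omega
        have hsd : A \ B' = (A \ B).erase a := by
          ext x
          simp only [hB'def, Finset.mem_sdiff, Finset.mem_insert, Finset.mem_erase,
            Finset.mem_sdiff, not_or]
          constructor
          · rintro ⟨hxA2, hxa, hxe⟩
            refine ⟨hxa, hxA2, fun hxB2 => hxe ⟨fun hxb => hbA (hxb ▸ hxA2), hxB2⟩⟩
          · rintro ⟨hxa, hxA2, hxB2⟩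
            exact ⟨hxA2, hxa, fun h => hxB2 h.2⟩
        have hcard' : (A \ B').card ≤ n := by
          rw [hsd, Finset.card_erase_of_mem haAB]
          omega
        obtain ⟨C, h1, h2, h3, h4⟩ := ih B' hBf' hBi' hcard'
        exact ⟨C, h1, h2, hcardB' ▸ h3, h4⟩

end AuxDescent

section AuxKalman

open Submodule Set

/-- The column of the block matrix associated to an index `(k, j)`. -/
def colv (N L K : ℕ) (D : Matrix (Fin N) (Fin N) ℝ) (H : Matrix (Fin N) (Fin L) ℝ) :
    Fin K × Fin L → (Fin N → ℝ) :=
  fun p => ((D ^ (K - 1 - (p.1 : ℕ))) * H)ᵀ p.2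

/-- The index set associated to a selection `g`. -/
def Aset {K s : ℕ} (L : ℕ) (g : Fin K → Fin s → Fin L) : Finset (Fin K × Fin L) :=
  Finset.image (fun q : Fin K × Fin s => (q.1, g q.1 q.2)) Finset.univ

lemma feas_Aset {K s L : ℕ} (g : Fin K → Fin s → Fin L) : KFeas s (Aset L g) := by
  intro k
  have hsub : (Aset L g).filter (fun p => p.1 = k) ⊆
      Finset.image (fun j : Fin s => (k, g k j)) Finset.univ := by
    intro x hx
    obtain ⟨hxA, hxk⟩ := Finset.mem_filter.mp hx
    obtain ⟨q, -, hq⟩ := Finset.mem_image.mp hxA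
    have hq1 : q.1 = k := by rw [← hxk, ← hq]
    refine Finset.mem_image.mpr ⟨q.2, Finset.mem_univ _, ?_⟩
    rw [← hq, hq1]
  calc ((Aset L g).filter (fun p => p.1 = k)).card
      ≤ (Finset.image (fun j : Fin s => (k, g k j)) Finset.univ).card := Finset.card_le_card hsub
    _ ≤ s := le_trans Finset.card_image_le (by simp)

lemma range_member {N L s K : ℕ} (D : Matrix (Fin N) (Fin N) ℝ) (H : Matrix (Fin N) (Fin L) ℝ)
    (g : Fin K → Fin s → Fin L) :
    LinearMap.range (Matrix.of fun (i : Fin N) (p : Fin K × Fin s) =>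
        ((D ^ (K - 1 - (p.1 : ℕ))) * H) i (g p.1 p.2)).mulVecLin
      = span ℝ (colv N L K D H '' ↑(Aset L g)) := by
  rw [Matrix.range_mulVecLin]
  congr 1
  have h1 : (Matrix.of fun (i : Fin N) (p : Fin K × Fin s) =>
      ((D ^ (K - 1 - (p.1 : ℕ))) * H) i (g p.1 p.2))ᵀ
      = colv N L K D H ∘ (fun q : Fin K × Fin s => (q.1, g q.1 q.2)) := rfl
  rw [Matrix.col, h1, Set.range_comp]
  congr 1
  rw [Aset, Finset.coe_image, Finset.coe_univ, Set.image_univ]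

lemma rank_member {N L s K : ℕ} (D : Matrix (Fin N) (Fin N) ℝ) (H : Matrix (Fin N) (Fin L) ℝ)
    (g : Fin K → Fin s → Fin L) :
    (Matrix.of fun (i : Fin N) (p : Fin K × Fin s) =>
        ((D ^ (K - 1 - (p.1 : ℕ))) * H) i (g p.1 p.2)).rank
      = Module.finrank ℝ (span ℝ (colv N L K D H '' ↑(Aset L g))) := by
  rw [show (Matrix.of fun (i : Fin N) (p : Fin K × Fin s) =>
      ((D ^ (K - 1 - (p.1 : ℕ))) * H) i (g p.1 p.2)).rank
    = Module.finrank ℝ (LinearMap.range (Matrix.of fun (i : Fin N) (p : Fin K × Fin s) =>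
      ((D ^ (K - 1 - (p.1 : ℕ))) * H) i (g p.1 p.2)).mulVecLin) from rfl, range_member]

lemma exists_cover {K L s : ℕ} (hsL : s ≤ L) (C : Finset (Fin K × Fin L)) (hC : KFeas s C) :
    ∃ g : Fin K → Fin s → Fin L, (∀ k, Function.Injective (g k)) ∧ C ⊆ Aset L g := by
  have hex : ∀ k : Fin K, ∃ gk : Fin s → Fin L, Function.Injective gk ∧
      ∀ p ∈ C, p.1 = k → ∃ j, gk j = p.2 := by
    intro k
    have h1 : ((C.filter (fun p => p.1 = k)).image Prod.snd).card ≤ s :=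
      le_trans Finset.card_image_le (hC k)
    obtain ⟨T, hTsub, hTcard⟩ := Finset.exists_superset_card_eq h1 (by simpa using hsL)
    let e := Finset.equivFinOfCardEq hTcard
    refine ⟨fun j => ↑(e.symm j), ?_, ?_⟩
    · intro j1 j2 h
      exact e.symm.injective (Subtype.ext h)
    · intro p hp hpk
      have hpT : p.2 ∈ T :=
        hTsub (Finset.mem_image_of_mem Prod.snd (Finset.mem_filter.mpr ⟨hp, hpk⟩))
      exact ⟨e ⟨p.2, hpT⟩, by simp⟩
  choose g hginj hgcov using hex
  refine ⟨g, hginj, fun p hp => ?_⟩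
  obtain ⟨j, hj⟩ := hgcov p.1 p hp rfl
  exact Finset.mem_image.mpr ⟨(p.1, j), Finset.mem_univ _, Prod.ext rfl hj⟩

end AuxKalman

open Submodule Set in
/-- For every `K` and every `M ∈ 𝓗_K`, there is `M* ∈ 𝓗_K` of maximum rank `R*_K`
whose column space contains the column space of `M`. -/
theorem exists_max_rank_dominating (N L s : ℕ) (hN : 0 < N) (hL : 0 < L) (hs : 0 < s)
    (hsL : s ≤ L)
    (D : Matrix (Fin N) (Fin N) ℝ) (H : Matrix (Fin N) (Fin L) ℝ) :
    ∀ K : ℕ, 0 < K → ∀ M ∈ KalmanFamily N L s D H K,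
      ∃ Mstar ∈ KalmanFamily N L s D H K,
        Mstar.rank = maxKalmanRank N L s D H K ∧
        LinearMap.range M.mulVecLin ≤ LinearMap.range Mstar.mulVecLin := by
  intro K hK M hM
  obtain ⟨f, hfinj, hMeq⟩ := id hM
  set vv := colv N L K D H with hvv
  have hBdd : BddAbove (Matrix.rank '' KalmanFamily N L s D H K) := by
    refine ⟨N, ?_⟩
    rintro x ⟨M', _, rfl⟩
    simpa using M'.rank_le_card_height
  have hne : (Matrix.rank '' KalmanFamily N L s D H K).Nonempty := ⟨M.rank, M, hM, rfl⟩
  have hmem : maxKalmanRank N L s D H K ∈ Matrix.rank '' KalmanFamily N L s D H K :=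
    Nat.sSup_mem hne hBdd
  obtain ⟨M0, hM0fam, hM0rank⟩ := hmem
  obtain ⟨g0, hg0inj, hM0eq⟩ := id hM0fam
  obtain ⟨B0, hB0sub, hB0ind, hB0span⟩ := exists_basis_subset vv (Aset L g0)
  have hB0feas : KFeas s B0 := KFeas.mono hB0sub (feas_Aset g0)
  have hB0card : B0.card = maxKalmanRank N L s D H K := by
    have h1 := KInd.card_eq vv hB0ind
    have h2 : M0.rank = Module.finrank ℝ (span ℝ (vv '' ↑(Aset L g0))) := by
      rw [hM0eq]; exact rank_member D H g0
    rw [← h1, hB0span, ← h2, hM0rank]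
  obtain ⟨C, hCfeas, hCind, hCcard, hCspan⟩ :=
    descend vv s (Aset L f) (feas_Aset f) ((Aset L f \ B0).card) B0 hB0feas hB0ind le_rfl
  obtain ⟨gstar, hgsinj, hCsub⟩ := exists_cover hsL C hCfeas
  refine ⟨Matrix.of fun (i : Fin N) (p : Fin K × Fin s) =>
      ((D ^ (K - 1 - (p.1 : ℕ))) * H) i (gstar p.1 p.2), ⟨gstar, hgsinj, rfl⟩, ?_, ?_⟩
  · refine le_antisymm (le_csSup hBdd ⟨_, ⟨gstar, hgsinj, rfl⟩, rfl⟩) ?_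
    rw [rank_member D H gstar]
    calc maxKalmanRank N L s D H K = B0.card := hB0card.symm
      _ ≤ C.card := hCcard
      _ = Module.finrank ℝ (span ℝ (vv '' ↑C)) := (KInd.card_eq vv hCind).symm
      _ ≤ Module.finrank ℝ (span ℝ (vv '' ↑(Aset L gstar))) :=
          Submodule.finrank_mono (span_mono (Set.image_mono (by exact_mod_cast hCsub)))
  · rw [hMeq, range_member D H f, range_member D H gstar]
    exact hCspan.trans (span_mono (Set.image_mono (by exact_mod_cast hCsub)))
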